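/- arXiv:2107.12941 — 2 statements merged into one kernel-verified Lean document; each statement's English description precedes it below -/
import Mathlib

section
/- Let c_n = ∫₀¹ t·Γ(n−t)/(Γ(n+1)·Γ(1−t)) dt for n ≥ 1. Then c_n ~ 1/(n·(log n)²) as n → ∞; that is, n·(log n)²·c_n → 1 as n → ∞. -/
open Filter Topology

open MeasureTheory Finset

/-- The Gregory-type coefficients `c_n = ∫₀¹ t·Γ(n−t)/(Γ(n+1)·Γ(1−t)) dt`. -/
noncomputable def cGreg (n : ℕ) : ℝ :=
  ∫ t in (0 : ℝ)..1, t * Real.Gamma ((n : ℝ) - t) /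
    (Real.Gamma ((n : ℝ) + 1) * Real.Gamma (1 - t))

noncomputable def fGreg (n : ℕ) (t : ℝ) : ℝ := ∏ k ∈ Finset.range (n-1), (1 - t/(k+1))

noncomputable def Hs (m : ℕ) : ℝ := ∑ k ∈ Finset.range m, (1:ℝ)/(k+1)

lemma gamma_add_nat (x : ℝ) (hx : 0 < x) (m : ℕ) :
    Real.Gamma (x + m) = (∏ k ∈ Finset.range m, (x + k)) * Real.Gamma x := by
  induction m with
  | zero => simp
  | succ m ih =>
    rw [show ((m+1 : ℕ) : ℝ) = (m : ℝ) + 1 by push_cast; ring]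
    rw [show x + ((m:ℝ)+1) = (x + m) + 1 by ring,
      Real.Gamma_add_one (by positivity), ih, Finset.prod_range_succ]
    ring

lemma Hs_succ (m : ℕ) : Hs (m+1) = Hs m + 1/((m:ℝ)+1) := by
  simp [Hs, Finset.sum_range_succ]

lemma log_le_Hs (m : ℕ) : Real.log (m+1) ≤ Hs m := by
  induction m with
  | zero => simp [Hs]
  | succ m ih =>
    have h2 : Real.log ((m:ℝ)+2) - Real.log ((m:ℝ)+1) ≤ 1/((m:ℝ)+1) := by
      rw [← Real.log_div (by positivity) (by positivity)]
      have h := Real.log_le_sub_one_of_pos (x := ((m:ℝ)+2)/((m:ℝ)+1)) (by positivity)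
      have he : ((m:ℝ)+2)/((m:ℝ)+1) - 1 = 1/((m:ℝ)+1) := by
        field_simp
        norm_num
      linarith
    rw [Hs_succ, show ((m+1 : ℕ) : ℝ) + 1 = (m:ℝ) + 2 by push_cast; ring]
    linarith

lemma Hs_le (m : ℕ) : Hs (m+1) ≤ 1 + Real.log (m+1) := by
  induction m with
  | zero => simp [Hs]
  | succ m ih =>
    have h2 : (1:ℝ)/((m:ℝ)+2) ≤ Real.log ((m:ℝ)+2) - Real.log ((m:ℝ)+1) := by
      rw [← Real.log_div (by positivity) (by positivity)]
      have h := Real.log_le_sub_one_of_pos (x := ((m:ℝ)+1)/((m:ℝ)+2)) (by positivity)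
      have h3 : Real.log (((m:ℝ)+1)/((m:ℝ)+2)) = - Real.log (((m:ℝ)+2)/((m:ℝ)+1)) := by
        rw [← Real.log_inv]; congr 1; field_simp
      have he : ((m:ℝ)+1)/((m:ℝ)+2) - 1 = -(1/((m:ℝ)+2)) := by field_simp; ring
      rw [h3, he] at h
      linarith
    rw [Hs_succ, show ((m+1 : ℕ) : ℝ) + 1 = (m:ℝ) + 2 by push_cast; ring]
    linarith

lemma sq_sum_le (m : ℕ) : ∑ k ∈ Finset.range m, (1:ℝ)/((k:ℝ)+1)^2 ≤ 2 := by
  have key : ∀ m : ℕ, ∑ k ∈ Finset.range (m+1), (1:ℝ)/((k:ℝ)+1)^2 ≤ 2 - 1/((m:ℝ)+1) := by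
    intro m
    induction m with
    | zero => simp; norm_num
    | succ m ih =>
      rw [Finset.sum_range_succ, show ((m+1 : ℕ) : ℝ) + 1 = (m:ℝ) + 2 by push_cast; ring]
      have h : (1:ℝ)/((m:ℝ)+2)^2 ≤ 1/((m:ℝ)+1) - 1/((m:ℝ)+2) := by
        rw [div_sub_div _ _ (by positivity) (by positivity),
          div_le_div_iff₀ (by positivity) (by positivity)]
        nlinarith [sq_nonneg ((m:ℝ)+1)]
      linarith
  match m with
  | 0 => simp
  | (m+1) =>
    have h0 : (0:ℝ) < 1/((m:ℝ)+1) := by positivity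
    linarith [key m]

lemma factor_nonneg {t : ℝ} (h0 : 0 ≤ t) (h1 : t ≤ 1) (k : ℕ) :
    0 ≤ 1 - t/((k:ℝ)+1) := by
  have hk : (0:ℝ) < (k:ℝ)+1 := by positivity
  have : t/((k:ℝ)+1) ≤ 1 := by
    rw [div_le_one hk]
    have : (1:ℝ) ≤ (k:ℝ)+1 := by
      have : (0:ℝ) ≤ (k:ℝ) := Nat.cast_nonneg k
      linarith
    linarith
  linarith

lemma fGreg_nonneg {n : ℕ} {t : ℝ} (h0 : 0 ≤ t) (h1 : t ≤ 1) : 0 ≤ fGreg n t :=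
  Finset.prod_nonneg fun k _ => factor_nonneg h0 h1 k

lemma fGreg_le {n : ℕ} {t : ℝ} (h0 : 0 ≤ t) (h1 : t ≤ 1) :
    fGreg n t ≤ Real.exp (-(t * Hs (n-1))) := by
  have he : Real.exp (-(t * Hs (n-1))) = ∏ k ∈ Finset.range (n-1),
      Real.exp (-(t/((k:ℝ)+1))) := by
    rw [← Real.exp_sum]
    congr 1
    rw [Hs, Finset.mul_sum, ← Finset.sum_neg_distrib]
    exact Finset.sum_congr rfl fun k _ => by rw [mul_one_div]
  rw [he, fGreg]
  refine Finset.prod_le_prod (fun k _ => factor_nonneg h0 h1 k) (fun k _ => ?_)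
  have := Real.add_one_le_exp (-(t/((k:ℝ)+1)))
  linarith

lemma exp_le_one_sub {x : ℝ} (h0 : 0 ≤ x) (h1 : x ≤ 1/2) :
    Real.exp (-x - 2*x^2) ≤ 1 - x := by
  have hx : |x| < 1 := by rw [abs_of_nonneg h0]; linarith
  have h := Real.abs_log_sub_add_sum_range_le hx 1
  simp only [Finset.sum_range_one, pow_one, Nat.cast_zero, zero_add, div_one] at h
  rw [abs_of_nonneg h0] at h
  have hb : x^2/(1-x) ≤ 2*x^2 := by
    rw [div_le_iff₀ (by linarith)]
    nlinarith
  have hlog : -x - 2*x^2 ≤ Real.log (1-x) := by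
    have := abs_le.mp h
    linarith [this.1]
  calc Real.exp (-x - 2*x^2) ≤ Real.exp (Real.log (1-x)) := Real.exp_le_exp.mpr hlog
    _ = 1 - x := Real.exp_log (by linarith)

lemma fGreg_ge {n : ℕ} {t : ℝ} (h0 : 0 ≤ t) (h1 : t ≤ 1/2) :
    Real.exp (-(t * Hs (n-1)) - 4*t^2) ≤ fGreg n t := by
  have hx : ∀ k : ℕ, 0 ≤ t/((k:ℝ)+1) ∧ t/((k:ℝ)+1) ≤ 1/2 := by
    intro k
    constructor
    · positivity
    · have hk : (1:ℝ) ≤ (k:ℝ)+1 := by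
        have : (0:ℝ) ≤ (k:ℝ) := Nat.cast_nonneg k
        linarith
      calc t/((k:ℝ)+1) ≤ t := div_le_self h0 hk
        _ ≤ 1/2 := h1
  have step1 : Real.exp (-(t * Hs (n-1)) - 4*t^2) ≤
      ∏ k ∈ Finset.range (n-1), Real.exp (-(t/((k:ℝ)+1)) - 2*(t/((k:ℝ)+1))^2) := by
    rw [← Real.exp_sum, Real.exp_le_exp]
    have e1 : ∑ k ∈ Finset.range (n-1), -(t/((k:ℝ)+1)) = -(t * Hs (n-1)) := by
      rw [Hs, Finset.mul_sum, ← Finset.sum_neg_distrib]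
      exact Finset.sum_congr rfl fun k _ => by rw [mul_one_div]
    have e2 : ∑ k ∈ Finset.range (n-1), 2*(t/((k:ℝ)+1))^2
        = 2*t^2 * ∑ k ∈ Finset.range (n-1), (1:ℝ)/((k:ℝ)+1)^2 := by
      rw [Finset.mul_sum]
      exact Finset.sum_congr rfl fun k _ => by rw [div_pow]; field_simp
    rw [Finset.sum_sub_distrib, e1, e2]
    have hS := sq_sum_le (n-1)
    have hS0 : 0 ≤ ∑ k ∈ Finset.range (n-1), (1:ℝ)/((k:ℝ)+1)^2 :=
      Finset.sum_nonneg fun k _ => by positivity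
    nlinarith [sq_nonneg t]
  refine step1.trans ?_
  rw [fGreg]
  refine Finset.prod_le_prod (fun k _ => (Real.exp_pos _).le) (fun k _ => ?_)
  exact exp_le_one_sub (hx k).1 (hx k).2

lemma prod_eq_factorial_mul (n : ℕ) (t : ℝ) :
    ∏ k ∈ Finset.range (n-1), ((1 - t) + (k:ℝ)) = ((Nat.factorial (n-1) : ℕ) : ℝ) * fGreg n t := by
  have : ∀ k ∈ Finset.range (n-1), (1 - t) + (k:ℝ) = ((k:ℝ)+1) * (1 - t/((k:ℝ)+1)) := by
    intro k _
    have hk : ((k:ℝ)+1) ≠ 0 := by positivity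
    field_simp
    ring
  rw [Finset.prod_congr rfl this, Finset.prod_mul_distrib, fGreg]
  congr 1
  have : ∀ m : ℕ, ∏ x ∈ Finset.range m, ((x:ℝ) + 1) = (Nat.factorial m : ℝ) := by
    intro m
    induction m with
    | zero => simp
    | succ m ih =>
      rw [Finset.prod_range_succ, Nat.factorial_succ, ih]
      push_cast
      ring
  exact this (n-1)

lemma integrand_eq {n : ℕ} (hn : 2 ≤ n) {t : ℝ} (h0 : 0 ≤ t) (h1 : t ≤ 1) :
    t * Real.Gamma ((n : ℝ) - t) / (Real.Gamma ((n : ℝ) + 1) * Real.Gamma (1 - t))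
      = t * fGreg n t / n := by
  rcases eq_or_lt_of_le h1 with rfl | h1'
  · -- t = 1
    simp only [Real.Gamma_zero, sub_self, mul_zero, div_zero]
    have : fGreg n 1 = 0 := by
      rw [fGreg]
      refine Finset.prod_eq_zero (i := 0) ?_ (by norm_num)
      simp only [Finset.mem_range]
      omega
    rw [this]
    simp
  · have hpos : 0 < 1 - t := by linarith
    have hcast : ((n : ℝ)) - t = (1 - t) + ((n-1 : ℕ) : ℝ) := by
      have : ((n-1 : ℕ) : ℝ) = (n : ℝ) - 1 := by
        have : (1:ℕ) ≤ n := by omega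
        push_cast [Nat.cast_sub this]
        ring
      rw [this]; ring
    rw [hcast, gamma_add_nat _ hpos, prod_eq_factorial_mul,
      show ((n:ℝ) + 1) = ((n:ℕ) : ℝ) + 1 by norm_cast, Real.Gamma_nat_eq_factorial]
    have hΓ : Real.Gamma (1 - t) ≠ 0 := (Real.Gamma_pos_of_pos hpos).ne'
    have hfac : ((Nat.factorial n : ℕ) : ℝ) = (n : ℝ) * (Nat.factorial (n-1) : ℕ) := by
      have : Nat.factorial n = n * Nat.factorial (n-1) := by
        rcases Nat.exists_eq_succ_of_ne_zero (by omega : n ≠ 0) with ⟨m, rfl⟩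
        simp [Nat.factorial_succ]
      rw [this]; push_cast; ring
    rw [hfac]
    have hfn : ((Nat.factorial (n-1) : ℕ) : ℝ) ≠ 0 := by positivity
    have hn0 : (n : ℝ) ≠ 0 := by positivity
    field_simp

lemma cGreg_eq {n : ℕ} (hn : 2 ≤ n) :
    (n : ℝ) * cGreg n = ∫ t in (0:ℝ)..1, t * fGreg n t := by
  have : cGreg n = ∫ t in (0:ℝ)..1, t * fGreg n t / n := by
    rw [cGreg]
    apply intervalIntegral.integral_congr
    intro t ht
    rw [Set.uIcc_of_le (by norm_num : (0:ℝ) ≤ 1)] at ht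
    exact integrand_eq hn ht.1 ht.2
  rw [this, intervalIntegral.integral_div]
  have hn0 : (n : ℝ) ≠ 0 := by positivity
  field_simp

lemma continuous_fGreg (n : ℕ) : Continuous (fGreg n) := by
  unfold fGreg
  exact continuous_finset_prod _ fun k _ => by continuity

lemma subst_eq {n : ℕ} (hn : 2 ≤ n) :
    (Real.log n)^2 * ∫ t in (0:ℝ)..1, t * fGreg n t
      = ∫ s in (0:ℝ)..(Real.log n), s * fGreg n (s / Real.log n) := by
  set L := Real.log n with hLdef
  have hL : 0 < L := Real.log_pos (by exact_mod_cast lt_of_lt_of_le one_lt_two (by exact_mod_cast hn))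
  have key := intervalIntegral.integral_comp_div (a := 0) (b := L) (c := L)
    (f := fun t => t * fGreg n t) hL.ne'
  simp only [zero_div, div_self hL.ne'] at key
  have e : ∀ s ∈ Set.uIcc (0:ℝ) L, s * fGreg n (s / L) = L * ((s/L) * fGreg n (s/L)) := by
    intro s _
    field_simp
  rw [show (∫ s in (0:ℝ)..L, s * fGreg n (s / L))
      = ∫ s in (0:ℝ)..L, L * ((s/L) * fGreg n (s/L)) from intervalIntegral.integral_congr e,
    intervalIntegral.integral_const_mul, key, smul_eq_mul]
  ring

lemma interval_to_indicator {n : ℕ} (hn : 2 ≤ n) :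
    (∫ s in (0:ℝ)..(Real.log n), s * fGreg n (s / Real.log n))
      = ∫ s in Set.Ioi (0:ℝ), (Set.Ioc (0:ℝ) (Real.log n)).indicator
          (fun s => s * fGreg n (s / Real.log n)) s := by
  have hL : 0 < Real.log n := Real.log_pos (by exact_mod_cast lt_of_lt_of_le one_lt_two (by exact_mod_cast hn))
  rw [intervalIntegral.integral_of_le hL.le,
    MeasureTheory.setIntegral_indicator measurableSet_Ioc,
    Set.inter_eq_self_of_subset_right Set.Ioc_subset_Ioi_self]

lemma tendsto_indicator_integral :
    Tendsto (fun n : ℕ => ∫ s in Set.Ioi (0:ℝ), (Set.Ioc (0:ℝ) (Real.log n)).indicator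
      (fun s => s * fGreg n (s / Real.log n)) s) atTop (𝓝 1) := by
  have hΓ : (∫ s in Set.Ioi (0:ℝ), s * Real.exp (-s)) = 1 := by
    have h2 : Real.Gamma 2 = ∫ x in Set.Ioi (0:ℝ), Real.exp (-x) * x ^ ((2:ℝ) - 1) :=
      Real.Gamma_eq_integral (by norm_num)
    rw [Real.Gamma_two, show ((2:ℝ) - 1) = 1 by norm_num] at h2
    simp_rw [Real.rpow_one] at h2
    rw [← h2.symm]
    apply MeasureTheory.integral_congr_ae
    filter_upwards with x
    ring
  have hbi : Integrable (fun s => s * Real.exp (-s)) (volume.restrict (Set.Ioi (0:ℝ))) := by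
    have h := Real.GammaIntegral_convergent (by norm_num : (0:ℝ) < 2)
    apply (h.congr_fun ?_ measurableSet_Ioi)
    intro x _
    simp only [show ((2:ℝ) - 1) = 1 by norm_num, Real.rpow_one]
    ring
  have hFm : ∀ n : ℕ, AEStronglyMeasurable
      ((Set.Ioc (0:ℝ) (Real.log n)).indicator (fun s => s * fGreg n (s / Real.log n)))
      (volume.restrict (Set.Ioi (0:ℝ))) := fun n =>
    ((continuous_id.mul ((continuous_fGreg n).comp
      (continuous_id.div_const _))).aestronglyMeasurable).indicator measurableSet_Ioc
  have hbound : ∀ n : ℕ, ∀ᵐ s ∂(volume.restrict (Set.Ioi (0:ℝ))),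
      ‖(Set.Ioc (0:ℝ) (Real.log n)).indicator (fun s => s * fGreg n (s / Real.log n)) s‖
        ≤ s * Real.exp (-s) := by
    intro n
    filter_upwards [MeasureTheory.ae_restrict_mem measurableSet_Ioi] with s hs
    have hs0 : (0:ℝ) < s := hs
    by_cases hmem : s ∈ Set.Ioc (0:ℝ) (Real.log n)
    · rw [Set.indicator_of_mem hmem]
      have hL : 0 < Real.log n := lt_of_lt_of_le hs0 hmem.2
      have hn1 : 1 ≤ n := by
        by_contra h
        interval_cases n <;> simp_all
      set t := s / Real.log n with htdef
      have ht0 : 0 ≤ t := by positivity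
      have ht1 : t ≤ 1 := by rw [htdef, div_le_one hL]; exact hmem.2
      have hf0 : 0 ≤ fGreg n t := fGreg_nonneg ht0 ht1
      rw [Real.norm_eq_abs, abs_of_nonneg (mul_nonneg hs0.le hf0)]
      have hHs : Real.log n ≤ Hs (n-1) := by
        have := log_le_Hs (n-1)
        rwa [show ((n-1 : ℕ) : ℝ) + 1 = (n : ℝ) by
          have : (n - 1) + 1 = n := by omega
          exact_mod_cast congrArg (Nat.cast : ℕ → ℝ) this] at this
      have h1 : fGreg n t ≤ Real.exp (-(t * Hs (n-1))) := fGreg_le ht0 ht1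
      have h2 : Real.exp (-(t * Hs (n-1))) ≤ Real.exp (-s) := by
        rw [Real.exp_le_exp, neg_le_neg_iff]
        calc s = t * Real.log n := by rw [htdef]; field_simp
          _ ≤ t * Hs (n-1) := by
            apply mul_le_mul_of_nonneg_left hHs ht0
      exact mul_le_mul_of_nonneg_left (h1.trans h2) hs0.le
    · rw [Set.indicator_of_notMem hmem]
      simp only [norm_zero]
      positivity
  have hlim : ∀ᵐ s ∂(volume.restrict (Set.Ioi (0:ℝ))),
      Tendsto (fun n : ℕ => (Set.Ioc (0:ℝ) (Real.log n)).indicator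
        (fun s => s * fGreg n (s / Real.log n)) s) atTop (𝓝 (s * Real.exp (-s))) := by
    filter_upwards [MeasureTheory.ae_restrict_mem measurableSet_Ioi] with s hs
    have hs0 : (0:ℝ) < s := hs
    have hLtop : Tendsto (fun n : ℕ => Real.log n) atTop atTop :=
      Real.tendsto_log_atTop.comp tendsto_natCast_atTop_atTop
    have hev : ∀ᶠ n : ℕ in atTop, 2*s ≤ Real.log n ∧ 2 ≤ n :=
      (hLtop.eventually_ge_atTop (2*s)).and (eventually_ge_atTop 2)
    have htend0 : Tendsto (fun n : ℕ => s / Real.log n) atTop (𝓝 0) :=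
      Tendsto.div_atTop tendsto_const_nhds hLtop
    have htH : Tendsto (fun n : ℕ => (s / Real.log n) * Hs (n-1)) atTop (𝓝 s) := by
      apply tendsto_of_tendsto_of_tendsto_of_le_of_le'
        (g := fun _ : ℕ => s) (h := fun n : ℕ => s + s / Real.log n)
        tendsto_const_nhds (by simpa using tendsto_const_nhds.add htend0)
      · filter_upwards [hev] with n hn
        obtain ⟨h2s, hn2⟩ := hn
        have hL : 0 < Real.log n := lt_of_lt_of_le (by positivity) h2s
        have hHs : Real.log n ≤ Hs (n-1) := by
          have := log_le_Hs (n-1)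
          rwa [show ((n-1 : ℕ) : ℝ) + 1 = (n : ℝ) by
            have h : (n - 1) + 1 = n := by omega
            exact_mod_cast congrArg (Nat.cast : ℕ → ℝ) h] at this
        calc s = (s / Real.log n) * Real.log n := by field_simp
          _ ≤ (s / Real.log n) * Hs (n-1) :=
            mul_le_mul_of_nonneg_left hHs (by positivity)
      · filter_upwards [hev] with n hn
        obtain ⟨h2s, hn2⟩ := hn
        have hL : 0 < Real.log n := lt_of_lt_of_le (by positivity) h2s
        have hHs : Hs (n-1) ≤ 1 + Real.log n := by
          have h := Hs_le (n-2)
          rw [show (n-2)+1 = n-1 by omega] at h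
          refine h.trans ?_
          have hlog : Real.log ((n-2 : ℕ) + 1) ≤ Real.log n := by
            apply Real.log_le_log (by positivity)
            have : ((n-2 : ℕ) : ℝ) + 1 ≤ (n : ℝ) := by
              have : (n-2) + 1 ≤ n := by omega
              exact_mod_cast this
            exact this
          linarith
        calc (s / Real.log n) * Hs (n-1) ≤ (s / Real.log n) * (1 + Real.log n) :=
            mul_le_mul_of_nonneg_left hHs (by positivity)
          _ = s + s / Real.log n := by field_simp; ring
    have hexp : Tendsto (fun n : ℕ =>
        -((s / Real.log n) * Hs (n-1)) - 4*(s / Real.log n)^2) atTop (𝓝 (-s)) := by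
      have h2 : Tendsto (fun n : ℕ => 4*(s / Real.log n)^2) atTop (𝓝 0) := by
        have := (htend0.pow 2).const_mul (4:ℝ)
        simpa using this
      have := htH.neg.sub h2
      simpa using this
    have hlower : Tendsto (fun n : ℕ =>
        s * Real.exp (-((s / Real.log n) * Hs (n-1)) - 4*(s / Real.log n)^2)) atTop
        (𝓝 (s * Real.exp (-s))) :=
      tendsto_const_nhds.mul ((Real.continuous_exp.tendsto _).comp hexp)
    have hupper : Tendsto (fun n : ℕ =>
        s * Real.exp (-((s / Real.log n) * Hs (n-1)))) atTop (𝓝 (s * Real.exp (-s))) :=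
      tendsto_const_nhds.mul ((Real.continuous_exp.tendsto _).comp htH.neg)
    apply tendsto_of_tendsto_of_tendsto_of_le_of_le' hlower hupper
    · filter_upwards [hev] with n hn
      obtain ⟨h2s, hn2⟩ := hn
      have hL : 0 < Real.log n := lt_of_lt_of_le (by positivity) h2s
      have hmem : s ∈ Set.Ioc (0:ℝ) (Real.log n) := ⟨hs0, by linarith⟩
      rw [Set.indicator_of_mem hmem]
      have ht0 : 0 ≤ s / Real.log n := by positivity
      have ht2 : s / Real.log n ≤ 1/2 := by
        rw [div_le_iff₀ hL]; linarith
      exact mul_le_mul_of_nonneg_left (fGreg_ge ht0 ht2) hs0.le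
    · filter_upwards [hev] with n hn
      obtain ⟨h2s, hn2⟩ := hn
      have hL : 0 < Real.log n := lt_of_lt_of_le (by positivity) h2s
      have hmem : s ∈ Set.Ioc (0:ℝ) (Real.log n) := ⟨hs0, by linarith⟩
      rw [Set.indicator_of_mem hmem]
      have ht0 : 0 ≤ s / Real.log n := by positivity
      have ht1 : s / Real.log n ≤ 1 := by
        rw [div_le_one hL]; linarith
      exact mul_le_mul_of_nonneg_left (fGreg_le ht0 ht1) hs0.le
  have := MeasureTheory.tendsto_integral_of_dominated_convergence
    (bound := fun s => s * Real.exp (-s)) hFm hbi hbound hlim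
  rwa [hΓ] at this

/-- The asymptotic relation `c_n ~ 1/(n·(log n)²)`, i.e. `n·(log n)²·c_n → 1`. -/
theorem cGreg_asymptotic :
    Tendsto (fun n : ℕ => (n : ℝ) * (Real.log n) ^ 2 * cGreg n) atTop (𝓝 1) := by
  apply tendsto_indicator_integral.congr'
  filter_upwards [eventually_ge_atTop 2] with n hn
  rw [← interval_to_indicator hn, ← subst_eq hn, ← cGreg_eq hn]
  ring
end

section
/- Let a ∈ (0,1). For z, w ∈ 𝔻 define k_a(z,w) = (1 − z·conj(w))^{−a} (principal branch; note Re(1 − z·conj(w)) > 0) and δ_a(z,w) = (1 − |k_a(z,w)|²/(k_a(z,z)·k_a(w,w)))^{1/2}. Then δ_a(z,w) = (1 − (1 − ρ(z,w)²)^a)^{1/2}, and a^{1/2}·ρ(z,w) ≤ δ_a(z,w) ≤ ρ(z,w) for all z, w ∈ 𝔻, where ρ(z,w) = |z−w|/|1−conj(z)·w| is the pseudohyperbolic metric on 𝔻. -/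
open Complex

/-- The reproducing kernel `k_a(z,w) = (1 − z·conj w)^{−a}` of the weighted Dirichlet
space `𝒟_a` (principal branch powers). -/
noncomputable def kA (a : ℝ) (z w : ℂ) : ℂ :=
  (1 - z * (starRingEnd ℂ) w) ^ (-(a : ℂ))

/-- The metric on the disc induced by `𝒟_a`. -/
noncomputable def deltaA (a : ℝ) (z w : ℂ) : ℝ :=
  Real.sqrt (1 - (‖kA a z w‖) ^ 2 / ((kA a z z).re * (kA a w w).re))

/-- The pseudohyperbolic metric on the unit disc. -/
noncomputable def rhoDisc (z w : ℂ) : ℝ :=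
  ‖z - w‖ / ‖1 - (starRingEnd ℂ) z * w‖

/-- For `a ∈ (0,1)` and `z, w ∈ 𝔻`:
`δ_a(z,w) = (1 − (1 − ρ(z,w)²)^a)^{1/2}` and `√a·ρ(z,w) ≤ δ_a(z,w) ≤ ρ(z,w)`. -/
theorem deltaA_equiv_pseudohyperbolic (a : ℝ) (ha : a ∈ Set.Ioo (0 : ℝ) 1)
    (z w : ℂ) (hz : ‖z‖ < 1) (hw : ‖w‖ < 1) :
    deltaA a z w = Real.sqrt (1 - (1 - rhoDisc z w ^ 2) ^ a) ∧
      Real.sqrt a * rhoDisc z w ≤ deltaA a z w ∧ deltaA a z w ≤ rhoDisc z w := by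
  
  obtain ⟨ha0, ha1⟩ := ha
  set X : ℝ := 1 - Complex.normSq z with hXdef
  set Y : ℝ := 1 - Complex.normSq w with hYdef
  have hX : 0 < X := by
    have := Complex.sq_norm z; nlinarith [norm_nonneg z]
  have hY : 0 < Y := by
    have := Complex.sq_norm w; nlinarith [norm_nonneg w]
  -- the kernel denominator is nonzero
  have hzw : (1 : ℂ) - z * (starRingEnd ℂ) w ≠ 0 := by
    intro h
    have h1 : ‖z * (starRingEnd ℂ) w‖ < 1 := by
      rw [norm_mul, Complex.norm_conj]
      nlinarith [norm_nonneg z, norm_nonneg w]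
    have : z * (starRingEnd ℂ) w = 1 := by linear_combination -h
    rw [this] at h1; simp at h1
  set A : ℝ := ‖1 - z * (starRingEnd ℂ) w‖ with hAdef
  have hA : 0 < A := norm_pos_iff.mpr hzw
  -- |kA a z w| = A ^ (-a)
  have habs : ‖kA a z w‖ = A ^ (-a) := by
    rw [kA, show (-(a:ℂ)) = ((-a : ℝ) : ℂ) by push_cast; ring, Complex.norm_cpow_real]
  -- diag values
  have hdiag : ∀ u : ℂ, 0 ≤ 1 - Complex.normSq u →
      (kA a u u).re = (1 - Complex.normSq u) ^ (-a) := by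
    intro u hu
    have h1 : (1 : ℂ) - u * (starRingEnd ℂ) u = ((1 - Complex.normSq u : ℝ) : ℂ) := by
      rw [Complex.mul_conj]; push_cast; ring
    rw [kA, h1, show (-(a:ℂ)) = ((-a : ℝ) : ℂ) by push_cast; ring,
      ← Complex.ofReal_cpow hu, Complex.ofReal_re]
  have hkz : (kA a z z).re = X ^ (-a) := hdiag z hX.le
  have hkw : (kA a w w).re = Y ^ (-a) := hdiag w hY.le
  -- key polarization identity
  have hpol : Complex.normSq (1 - (starRingEnd ℂ) z * w) - Complex.normSq (z - w) = X * Y := by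
    simp only [hXdef, hYdef, Complex.normSq_apply, Complex.sub_re, Complex.sub_im,
      Complex.mul_re, Complex.mul_im, Complex.one_re, Complex.one_im,
      Complex.conj_re, Complex.conj_im]
    ring
  -- A equals the abs in rhoDisc
  have hAA : ‖1 - (starRingEnd ℂ) z * w‖ = A := by
    rw [hAdef, ← Complex.norm_conj (1 - (starRingEnd ℂ) z * w)]
    congr 1
    simp [map_mul, mul_comm]
  have hA2 : Complex.normSq (1 - (starRingEnd ℂ) z * w) = A ^ 2 := by
    rw [← Complex.sq_norm, hAA]
  have hrho2 : rhoDisc z w ^ 2 = Complex.normSq (z - w) / A ^ 2 := by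
    rw [rhoDisc, div_pow, hAA, Complex.sq_norm]
  set t : ℝ := X * Y / A ^ 2 with htdef
  have ht_eq : 1 - rhoDisc z w ^ 2 = t := by
    rw [hrho2, htdef, ← hpol, hA2]
    field_simp
  have ht0 : 0 < t := by positivity
  have ht1 : t ≤ 1 := by
    rw [htdef, div_le_one (by positivity), ← hpol, hA2]
    nlinarith [Complex.normSq_nonneg (z - w)]
  -- ratio identity
  have h1 : (A ^ (-a)) ^ 2 = ((A ^ 2 : ℝ)) ^ (-a) := by
    rw [← Real.rpow_natCast (A ^ (-a)) 2, ← Real.rpow_mul hA.le,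
      ← Real.rpow_natCast A 2, ← Real.rpow_mul hA.le]
    ring_nf
  have h2 : X ^ (-a) * Y ^ (-a) = (X * Y) ^ (-a) := (Real.mul_rpow hX.le hY.le).symm
  have hratio : (‖kA a z w‖) ^ 2 / ((kA a z z).re * (kA a w w).re) = t ^ a := by
    rw [habs, hkz, hkw, h1, h2, Real.rpow_neg (by positivity), Real.rpow_neg (by positivity),
      htdef, Real.div_rpow (by positivity) (by positivity), inv_div_inv]
  -- Bernoulli-type bounds
  have hta : t ≤ t ^ a := by
    calc t = t ^ (1:ℝ) := (Real.rpow_one t).symm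
    _ ≤ t ^ a := Real.rpow_le_rpow_of_exponent_ge ht0 ht1 ha1.le
  have htb : t ^ a ≤ 1 - a * (1 - t) := by
    have := rpow_one_add_le_one_add_mul_self (s := t - 1) (by linarith) (p := a) ha0.le ha1.le
    have e : (1 : ℝ) + (t - 1) = t := by ring
    rw [e] at this
    linarith
  have hta1 : t ^ a ≤ 1 := le_trans htb (by nlinarith)
  have hta0 : 0 < t ^ a := Real.rpow_pos_of_pos ht0 a
  have hrho_nonneg : 0 ≤ rhoDisc z w := by
    rw [rhoDisc]; positivity
  have hdelta : deltaA a z w = Real.sqrt (1 - t ^ a) := by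
    rw [deltaA, hratio]
  have hr2 : rhoDisc z w ^ 2 = 1 - t := by linarith
  refine ⟨by rw [hdelta, ht_eq], ?_, ?_⟩
  · calc Real.sqrt a * rhoDisc z w = Real.sqrt (a * rhoDisc z w ^ 2) := by
          rw [Real.sqrt_mul ha0.le, Real.sqrt_sq hrho_nonneg]
      _ ≤ Real.sqrt (1 - t ^ a) := Real.sqrt_le_sqrt (by rw [hr2]; linarith)
      _ = deltaA a z w := hdelta.symm
  · rw [hdelta]
    calc Real.sqrt (1 - t ^ a) ≤ Real.sqrt (rhoDisc z w ^ 2) :=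
          Real.sqrt_le_sqrt (by rw [hr2]; linarith)
      _ = rhoDisc z w := Real.sqrt_sq hrho_nonneg
end
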